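/- Define f₀(g) := (3 + √(1+8g))/(2(1 + √(1+8g))) + log((1 + √(1+8g))/2) for g ≥ −1/8, so that f₀(−1/8) = 3/2 − log 2. Then, as g tends to −1/8 from the right, the quotient (f₀(g) − (3/2 − log 2) − 4·(g + 1/8)) / (g + 1/8)^{3/2} tends to −32√2/3. -/

import Mathlib

open Filter Real

lemma log_taylor3 {s : ℝ} (h0 : 0 < s) (h1 : s < 1) :
    |Real.log (1 + s) - (s - s^2/2 + s^3/3)| ≤ s^4 / (1 - s) := by
  have habs : |(-s : ℝ)| < 1 := by rw [abs_neg, abs_of_pos h0]; exact h1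
  have key := Real.abs_log_sub_add_sum_range_le habs 3
  simp only [Finset.sum_range_succ, Finset.sum_range_zero] at key
  norm_num at key
  rw [abs_of_pos h0] at key
  rw [abs_sub_comm, show s - s^2/2 + s^3/3 - Real.log (1+s)
    = -((-s + s^2/2 + (-s)^3/3 + Real.log (1+s))) by ring, abs_neg]
  exact key

lemma hN : Tendsto (fun s : ℝ => (1/(1+s) - 1 + Real.log (1+s) - s^2/2)/s^3)
    (nhdsWithin 0 (Set.Ioi 0)) (nhds (-2/3)) := by
  have hE : Tendsto (fun s : ℝ => (Real.log (1+s) - (s - s^2/2 + s^3/3))/s^3)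
      (nhdsWithin 0 (Set.Ioi 0)) (nhds 0) := by
    apply squeeze_zero_norm' (a := fun s => s/(1-s))
    · filter_upwards [self_mem_nhdsWithin,
        Icc_mem_nhdsGT_of_mem (by norm_num : (0:ℝ) ∈ Set.Ico 0 (1/2))] with s hs hs2
      have h0 : (0:ℝ) < s := hs
      have h1 : s < 1 := lt_of_le_of_lt hs2.2 (by norm_num)
      have h1s : (0:ℝ) < 1 - s := by linarith
      rw [norm_div, norm_of_nonneg (by positivity : (0:ℝ) ≤ s^3), div_le_iff₀ (by positivity)]
      calc ‖Real.log (1+s) - (s - s^2/2 + s^3/3)‖ ≤ s^4/(1-s) := log_taylor3 h0 h1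
        _ = s/(1-s) * s^3 := by field_simp
    · have : Tendsto (fun s : ℝ => s/(1-s)) (nhds 0) (nhds (0/(1-0))) := by
        apply Tendsto.div tendsto_id (tendsto_const_nhds.sub tendsto_id) (by norm_num)
      simpa using this.mono_left nhdsWithin_le_nhds
  have hA : Tendsto (fun s : ℝ => (-2+s)/(3*(1+s)))
      (nhdsWithin 0 (Set.Ioi 0)) (nhds (-2/3)) := by
    have : Tendsto (fun s : ℝ => (-2+s)/(3*(1+s))) (nhds 0) (nhds ((-2+0)/(3*(1+0)))) := by
      apply Tendsto.div (tendsto_const_nhds.add tendsto_id)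
        (tendsto_const_nhds.mul (tendsto_const_nhds.add tendsto_id)) (by norm_num)
    have h2 : ((-2:ℝ)+0)/(3*(1+0)) = -2/3 := by norm_num
    rw [h2] at this
    exact this.mono_left nhdsWithin_le_nhds
  have := hA.add hE
  rw [add_zero] at this
  apply this.congr'
  filter_upwards [self_mem_nhdsWithin] with s hs
  have h0 : (0:ℝ) < s := hs
  have h1 : (0:ℝ) < 1 + s := by linarith
  field_simp
  ring

lemma aux_sqrt_tendsto :
    Tendsto (fun g : ℝ => Real.sqrt (1+8*g)) (nhdsWithin (-1/8) (Set.Ioi (-1/8)))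
      (nhdsWithin 0 (Set.Ioi 0)) := by
  rw [tendsto_nhdsWithin_iff]
  constructor
  · have : Tendsto (fun g : ℝ => Real.sqrt (1+8*g)) (nhds (-1/8))
        (nhds (Real.sqrt (1+8*(-1/8)))) :=
      ((continuous_const.add (continuous_const.mul continuous_id)).sqrt).continuousAt
    have h0 : Real.sqrt (1+8*(-1/8)) = 0 := by norm_num
    rw [h0] at this
    exact this.mono_left nhdsWithin_le_nhds
  · filter_upwards [self_mem_nhdsWithin] with g hg
    have : (0:ℝ) < 1 + 8*g := by simp at hg ⊢; linarith
    exact Real.sqrt_pos.mpr this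

/-- Leading order free energy of the quartic melonic tensor model. -/
noncomputable def quarticFreeEnergy (g : ℝ) : ℝ :=
  (3 + Real.sqrt (1 + 8 * g)) / (2 * (1 + Real.sqrt (1 + 8 * g)))
    + Real.log ((1 + Real.sqrt (1 + 8 * g)) / 2)

/-- `f₀(-1/8) = 3/2 - log 2`, and the singular part of `f₀` near `g_c = -1/8` behaves
as `(g - g_c)^{3/2}`: `(f₀(g) - (3/2 - log 2) - 4(g + 1/8)) / (g + 1/8)^{3/2} → -32√2/3`
as `g → -1/8⁺`. -/
theorem stmt_13 :
    quarticFreeEnergy (-1/8) = 3/2 - Real.log 2 ∧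
    Tendsto (fun g : ℝ =>
        (quarticFreeEnergy g - (3/2 - Real.log 2) - 4 * (g + 1/8))
          / (g + 1/8) ^ ((3 : ℝ)/2))
      (nhdsWithin (-1/8) (Set.Ioi (-1/8)))
      (nhds (-(32 * Real.sqrt 2) / 3)) := by
  constructor
  · have h0 : (1:ℝ) + 8 * (-1/8) = 0 := by norm_num
    rw [quarticFreeEnergy, h0, Real.sqrt_zero,
      show ((1:ℝ)+0)/2 = 2⁻¹ by norm_num, Real.log_inv]
    norm_num
    ring
  · have hcomp := hN.comp aux_sqrt_tendsto
    have hmul := hcomp.const_mul (16*Real.sqrt 2)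
    have hval : 16*Real.sqrt 2 * (-2/3) = -(32*Real.sqrt 2)/3 := by ring
    rw [hval] at hmul
    apply hmul.congr'
    filter_upwards [self_mem_nhdsWithin] with g hg
    simp only [Function.comp]
    set s := Real.sqrt (1+8*g) with hsdef
    have hg' : (-1/8 : ℝ) < g := hg
    have hgp : (0:ℝ) < 1+8*g := by linarith
    have hs : 0 < s := Real.sqrt_pos.mpr hgp
    have hs2 : s^2 = 1+8*g := Real.sq_sqrt hgp.le
    have h1s : (0:ℝ) < 1+s := by linarith
    have hnum : quarticFreeEnergy g - (3/2 - Real.log 2) - 4*(g+1/8)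
        = 1/(1+s) - 1 + Real.log (1+s) - s^2/2 := by
      rw [quarticFreeEnergy, Real.log_div h1s.ne' two_ne_zero]
      have h4 : 4*(g+1/8) = s^2/2 := by rw [hs2]; ring
      rw [← hsdef, h4]
      field_simp
      ring
    have ha : (s^2 : ℝ)^((3:ℝ)/2) = s^3 := by
      rw [← Real.rpow_natCast s 2, ← Real.rpow_mul hs.le,
        show ((2:ℕ):ℝ)*((3:ℝ)/2) = ((3:ℕ):ℝ) by norm_num, Real.rpow_natCast]
    have hb : ((8:ℝ))^((3:ℝ)/2) = 16*Real.sqrt 2 := by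
      have h1 : (0:ℝ) ≤ (8:ℝ)^((3:ℝ)/2) := Real.rpow_nonneg (by norm_num) _
      have h2 : (0:ℝ) ≤ 16*Real.sqrt 2 := by positivity
      have hsq : (((8:ℝ))^((3:ℝ)/2))^2 = (16*Real.sqrt 2)^2 := by
        rw [← Real.rpow_natCast ((8:ℝ)^((3:ℝ)/2)) 2, ← Real.rpow_mul (by norm_num),
          mul_pow, Real.sq_sqrt (by norm_num : (0:ℝ) ≤ 2),
          show ((3:ℝ)/2*((2:ℕ):ℝ)) = ((3:ℕ):ℝ) by norm_num, Real.rpow_natCast]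
        norm_num
      calc (8:ℝ)^((3:ℝ)/2) = Real.sqrt (((8:ℝ)^((3:ℝ)/2))^2) := (Real.sqrt_sq h1).symm
        _ = Real.sqrt ((16*Real.sqrt 2)^2) := by rw [hsq]
        _ = 16*Real.sqrt 2 := Real.sqrt_sq h2
    have hden : (g+1/8) ^ ((3:ℝ)/2) = s^3/(16*Real.sqrt 2) := by
      have hx : g + 1/8 = s^2/8 := by rw [hs2]; ring
      rw [hx, Real.div_rpow (sq_nonneg s) (by norm_num : (0:ℝ) ≤ 8), ha, hb]
    rw [hnum, hden, div_div_eq_mul_div]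
    have hsqrt2 : (0:ℝ) < Real.sqrt 2 := Real.sqrt_pos.mpr (by norm_num)
    field_simp
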